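/- Assume K₁ < 1/(a·h). If either (i) r₂ ≤ d < r₂ + a·e·K₁/(a·h·K₁ + 1), or (ii) d < r₂ and 0 < K₂(1 − d/r₂) < r₁/a, then the host–parasite ecological model has exactly one interior equilibrium, i.e. there is exactly one point (x₁*, x₂*) with x₁* > 0 and x₂* > 0 at which both right-hand sides of the system vanish. -/

import Mathlib

set_option maxHeartbeats 1000000 in
/-- if K₁ < 1/(ah) and either r₂ ≤ d < r₂ + aeK₁/(ahK₁ + 1),
or d < r₂ with 0 < K₂(1 − d/r₂) < r₁/a, then the host–parasite ecological model
has exactly one interior equilibrium. -/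
theorem unique_interior_equilibrium
    (r₁ r₂ K₁ K₂ a h e d : ℝ)
    (hr₁ : 0 < r₁) (hr₂ : 0 < r₂) (hK₁ : 0 < K₁) (hK₂ : 0 < K₂)
    (ha : 0 < a) (hh : 0 < h) (he : 0 < e) (hd : 0 ≤ d)
    (hK : K₁ < 1 / (a * h))
    (hcond : (r₂ ≤ d ∧ d < r₂ + a * e * K₁ / (a * h * K₁ + 1)) ∨
             (d < r₂ ∧ 0 < K₂ * (1 - d / r₂) ∧ K₂ * (1 - d / r₂) < r₁ / a)) :
    ∃! p : ℝ × ℝ, 0 < p.1 ∧ 0 < p.2 ∧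
      p.1 * (r₁ * (1 - p.1 / K₁) - a * p.2 / (1 + h * a * p.1)) = 0 ∧
      p.2 * (e * a * p.1 / (1 + h * a * p.1) - d + r₂ * (1 - p.2 / K₂)) = 0 := by
  have hK₁' : K₁ ≠ 0 := hK₁.ne'
  have ha' : a ≠ 0 := ha.ne'
  have hr₂' : r₂ ≠ 0 := hr₂.ne'
  have hK₂' : K₂ ≠ 0 := hK₂.ne'
  have hahK : a * h * K₁ < 1 := by
    have h1 : K₁ * (a * h) < 1 := (lt_div_iff₀ (by positivity)).mp hK
    linarith [h1]
  have hden : ∀ x : ℝ, 0 ≤ x → 0 < 1 + h * a * x := by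
    intro x hx
    nlinarith [mul_nonneg (mul_nonneg hh.le ha.le) hx]
  set F : ℝ → ℝ := fun x => r₁ * (1 - x / K₁) * (1 + h * a * x) / a with hFdef
  set G : ℝ → ℝ := fun x => K₂ / r₂ * (e * a * x / (1 + h * a * x) - d + r₂) with hGdef
  set H : ℝ → ℝ := fun x => F x - G x with hHdef
  -- equivalence of equilibrium conditions
  have hequiv : ∀ x y : ℝ, 0 < x → 0 < y →
      ((x * (r₁ * (1 - x / K₁) - a * y / (1 + h * a * x)) = 0 ∧
        y * (e * a * x / (1 + h * a * x) - d + r₂ * (1 - y / K₂)) = 0)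
       ↔ (y = F x ∧ H x = 0)) := by
    intro x y hx hy
    have dx : (0:ℝ) < 1 + h * a * x := hden x hx.le
    constructor
    · rintro ⟨e1, e2⟩
      have e1' : r₁ * (1 - x / K₁) - a * y / (1 + h * a * x) = 0 :=
        (mul_eq_zero.mp e1).resolve_left hx.ne'
      have e2' : e * a * x / (1 + h * a * x) - d + r₂ * (1 - y / K₂) = 0 :=
        (mul_eq_zero.mp e2).resolve_left hy.ne'
      have hyF : y = F x := by
        simp only [hFdef]
        field_simp at e1' ⊢
        nlinarith [e1']
      have hyG : y = G x := by
        simp only [hGdef]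
        field_simp at e2' ⊢
        nlinarith [e2']
      exact ⟨hyF, by simp only [hHdef]; rw [← hyF, ← hyG]; ring⟩
    · rintro ⟨hyF, hH0⟩
      have hyG : y = G x := by
        simp only [hHdef] at hH0
        linarith [hH0]
      constructor
      · have hz : r₁ * (1 - x / K₁) - a * y / (1 + h * a * x) = 0 := by
          rw [hyF]; simp only [hFdef]; field_simp; ring
        rw [hz, mul_zero]
      · have hz : e * a * x / (1 + h * a * x) - d + r₂ * (1 - y / K₂) = 0 := by
          rw [hyG]; simp only [hGdef]; field_simp; ring
        rw [hz, mul_zero]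
  have Fexp : ∀ x : ℝ, F x = r₁ * (K₁ - x) * (1 + h * a * x) / (a * K₁) := by
    intro x; simp only [hFdef]
    rw [div_eq_div_iff ha' (mul_ne_zero ha' hK₁')]
    field_simp
  -- strict antitonicity of H on [0, ∞)
  have hanti : StrictAntiOn H (Set.Ici 0) := by
    intro x hx y hy hxy
    simp only [Set.mem_Ici] at hx hy
    have dx : (0:ℝ) < 1 + h * a * x := hden x hx
    have dy : (0:ℝ) < 1 + h * a * y := hden y hy
    have hF : F y < F x := by
      rw [Fexp, Fexp, div_lt_div_iff₀ (show (0:ℝ) < a * K₁ by positivity)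
        (show (0:ℝ) < a * K₁ by positivity)]
      have key1 : (K₁ - y) * (1 + h * a * y) < (K₁ - x) * (1 + h * a * x) := by
        nlinarith [mul_pos (sub_pos.mpr hxy) (sub_pos.mpr hahK),
          mul_nonneg (mul_nonneg hh.le ha.le)
            (mul_nonneg (add_nonneg hy hx) (sub_nonneg.mpr hxy.le))]
      nlinarith [mul_lt_mul_of_pos_right (mul_lt_mul_of_pos_left key1 hr₁)
        (show (0:ℝ) < a * K₁ by positivity)]
    have hG : G x < G y := by
      simp only [hGdef]
      have hin : e * a * x / (1 + h * a * x) < e * a * y / (1 + h * a * y) := by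
        rw [div_lt_div_iff₀ dx dy]
        nlinarith [mul_pos (mul_pos he ha) (sub_pos.mpr hxy)]
      have hKr : (0:ℝ) < K₂ / r₂ := by positivity
      apply mul_lt_mul_of_pos_left _ hKr
      linarith
    simp only [hHdef]
    linarith
  -- continuity of H
  have hcont : ContinuousOn H (Set.Icc 0 K₁) := by
    apply ContinuousOn.sub
    · apply Continuous.continuousOn
      apply Continuous.div_const
      continuity
    · apply ContinuousOn.mul continuousOn_const
      apply ContinuousOn.add
      apply ContinuousOn.sub
      · apply ContinuousOn.div
        · exact Continuous.continuousOn (by continuity)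
        · exact Continuous.continuousOn (by continuity)
        · intro x hx
          exact (hden x hx.1).ne'
      · exact continuousOn_const
      · exact continuousOn_const
  -- sign of H at the endpoints
  have hH0 : 0 < H 0 := by
    simp only [hHdef, hFdef, hGdef]
    have hF0 : r₁ * (1 - 0 / K₁) * (1 + h * a * 0) / a = r₁ / a := by
      field_simp
      ring
    have hG0 : K₂ / r₂ * (e * a * 0 / (1 + h * a * 0) - d + r₂) = K₂ * (1 - d / r₂) := by
      rw [mul_zero, zero_div, zero_sub]
      field_simp
      ring
    rw [hF0, hG0]
    rcases hcond with ⟨h1, _⟩ | ⟨_, _, h3⟩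
    · have : K₂ * (1 - d / r₂) ≤ 0 := by
        apply mul_nonpos_of_nonneg_of_nonpos hK₂.le
        have : 1 ≤ d / r₂ := (le_div_iff₀ hr₂).mpr (by linarith)
        linarith
      have : (0:ℝ) < r₁ / a := by positivity
      linarith
    · linarith
  have hHK₁ : H K₁ < 0 := by
    have dK : (0:ℝ) < 1 + h * a * K₁ := hden K₁ hK₁.le
    simp only [hHdef, hFdef, hGdef]
    have hFK : r₁ * (1 - K₁ / K₁) * (1 + h * a * K₁) / a = 0 := by
      rw [div_self hK₁.ne']; simp
    rw [hFK]
    have hGK : 0 < K₂ / r₂ * (e * a * K₁ / (1 + h * a * K₁) - d + r₂) := by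
      apply mul_pos (by positivity)
      have key : d < r₂ + e * a * K₁ / (1 + h * a * K₁) := by
        rcases hcond with ⟨_, h2⟩ | ⟨h1, _, _⟩
        · have : a * e * K₁ / (a * h * K₁ + 1) = e * a * K₁ / (1 + h * a * K₁) := by
            ring_nf
          linarith [h2, this ▸ h2]
        · have : 0 < e * a * K₁ / (1 + h * a * K₁) := by positivity
          linarith
      linarith
    linarith
  -- existence of a root of H in (0, K₁)
  obtain ⟨x₀, hx₀mem, hx₀⟩ : ∃ x₀ ∈ Set.Ioo 0 K₁, H x₀ = 0 := by
    have := intermediate_value_Ioo' hK₁.le hcont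
    have h0 : (0:ℝ) ∈ Set.Ioo (H K₁) (H 0) := ⟨hHK₁, hH0⟩
    obtain ⟨x₀, hmem, hval⟩ := this h0
    exact ⟨x₀, hmem, hval⟩
  have hx₀pos : 0 < x₀ := hx₀mem.1
  have hx₀K : x₀ < K₁ := hx₀mem.2
  have hFpos : 0 < F x₀ := by
    simp only [hFdef]
    have h1 : 0 < 1 - x₀ / K₁ := by
      rw [sub_pos, div_lt_one hK₁]; exact hx₀K
    have h2 : (0:ℝ) < 1 + h * a * x₀ := hden x₀ hx₀pos.le
    positivity
  refine ⟨(x₀, F x₀), ⟨hx₀pos, hFpos, ?_⟩, ?_⟩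
  · exact (hequiv x₀ (F x₀) hx₀pos hFpos).mpr ⟨rfl, hx₀⟩
  · rintro ⟨u, v⟩ ⟨hu, hv, e1, e2⟩
    obtain ⟨hvF, hHu⟩ := (hequiv u v hu hv).mp ⟨e1, e2⟩
    have hux : u = x₀ :=
      hanti.injOn (Set.mem_Ici.mpr hu.le) (Set.mem_Ici.mpr hx₀pos.le) (by rw [hHu, hx₀])
    simp only [Prod.mk.injEq]
    exact ⟨hux, by rw [hvF, hux]⟩
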